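/- Let G=(V,E) be a directed acyclic graph on V=[p] containing all self-loops, and let C be a symmetric positive definite p×p matrix. Then the graphical continuous Lyapunov model M_{G,C} is a closed subset of PD_p in the subspace topology, i.e., it is relatively closed in the set of symmetric positive definite matrices. -/

import Mathlib

open Matrix MeasureTheory

/-- A real square matrix is *stable* if every eigenvalue (over `ℂ`) has strictly
negative real part. -/
def IsStableMat {n : Type*} [Fintype n] [DecidableEq n] (M : Matrix n n ℝ) : Prop :=
  ∀ μ ∈ spectrum ℂ (M.map (algebraMap ℝ ℂ)), μ.re < 0

/-- `M ∈ ℝ^E`: the matrix `M` is supported on the directed graph with edge set `E`,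
i.e. `M j i = 0` whenever `(i, j) ∉ E`. -/
def InSupp {n : Type*} (E : Set (n × n)) (M : Matrix n n ℝ) : Prop :=
  ∀ i j : n, (i, j) ∉ E → M j i = 0

/-- The graphical continuous Lyapunov model `M_{G,C}`: positive definite matrices `S`
such that `M * S + S * Mᵀ + C = 0` for some `M ∈ ℝ^E`. -/
def LyapModel {n : Type*} [Fintype n] [DecidableEq n] (E : Set (n × n))
    (C : Matrix n n ℝ) : Set (Matrix n n ℝ) :=
  {S | S.PosDef ∧ ∃ M : Matrix n n ℝ, InSupp E M ∧ M * S + S * Mᵀ + C = 0}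

/-- Global identifiability: no two stable matrices supported on `E` yield the same
solution of the Lyapunov equation.  (Since for stable `M` the Lyapunov equation has a
unique positive definite solution `Σ(M,C)`, this is equivalent to every fiber
`F_{G,C}(M₀)` being the singleton `{M₀}`.) -/
def GloballyIdentifiable {n : Type*} [Fintype n] [DecidableEq n] (E : Set (n × n))
    (C : Matrix n n ℝ) : Prop :=
  ∀ M₁ M₂ : Matrix n n ℝ,
    InSupp E M₁ → IsStableMat M₁ → InSupp E M₂ → IsStableMat M₂ →
    ∀ S : Matrix n n ℝ, S.PosDef →
      M₁ * S + S * M₁ᵀ + C = 0 → M₂ * S + S * M₂ᵀ + C = 0 → M₁ = M₂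

/-- A directed graph is *simple* if it has no 2-cycles between distinct nodes. -/
def IsSimpleDigraph {n : Type*} (E : Set (n × n)) : Prop :=
  ∀ i j : n, i ≠ j → (i, j) ∈ E → (j, i) ∉ E

/-- The fiber `F_{G,C}(M₀)`: all stable matrices supported on `E` whose Lyapunov
solution coincides with that of `M₀`, i.e. some positive definite `S` solves the
Lyapunov equation for both `M₀` and `M`. -/
def Fiber {n : Type*} [Fintype n] [DecidableEq n] (E : Set (n × n))
    (C M₀ : Matrix n n ℝ) : Set (Matrix n n ℝ) :=
  {M | InSupp E M ∧ IsStableMat M ∧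
    ∃ S : Matrix n n ℝ, S.PosDef ∧ M₀ * S + S * M₀ᵀ + C = 0 ∧ M * S + S * Mᵀ + C = 0}

/-- The identification of the coordinate space `ℝ^{|E|}` with the matrices in `ℝ^E`:
the coordinate attached to an edge `(i,j)` is the entry `M j i`. -/
def edgeMatrix {p : ℕ} (E : Finset (Fin p × Fin p)) (f : E → ℝ) :
    Matrix (Fin p) (Fin p) ℝ :=
  fun j i => if h : (i, j) ∈ E then f ⟨(i, j), h⟩ else 0

/-- Generic identifiability: the set of parameter vectors `f ∈ ℝ^{|E|}` whose matrix
is stable but whose fiber is not a singleton is a Lebesgue null set. -/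
def GenericallyIdentifiable {p : ℕ} (E : Finset (Fin p × Fin p))
    (C : Matrix (Fin p) (Fin p) ℝ) : Prop :=
  volume {f : E → ℝ | IsStableMat (edgeMatrix E f) ∧
    Fiber (E : Set (Fin p × Fin p)) C (edgeMatrix E f) ≠ {edgeMatrix E f}} = 0

open Filter Topology in
lemma lyap_inj {p : ℕ} (E : Set (Fin p × Fin p))
    (hacyc : ∀ i : Fin p,
      ¬ Relation.TransGen (fun a b : Fin p => (a, b) ∈ E ∧ a ≠ b) i i)
    (S : Matrix (Fin p) (Fin p) ℝ) (hS : S.PosDef)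
    (M : Matrix (Fin p) (Fin p) ℝ) (hM : InSupp E M)
    (heq : M * S + S * Mᵀ = 0) : M = 0 := by
  set R : Fin p → Fin p → Prop := fun a b => (a, b) ∈ E ∧ a ≠ b with hR
  haveI : IsTrans (Fin p) (Relation.TransGen R) := ⟨fun _ _ _ => Relation.TransGen.trans⟩
  haveI : IsIrrefl (Fin p) (Relation.TransGen R) := ⟨hacyc⟩
  have hwfT : WellFounded (Relation.TransGen R) :=
    Finite.wellFounded_of_trans_of_irrefl _
  have hwf : WellFounded R := Subrelation.wf (fun {a b} h => Relation.TransGen.single h) hwfT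
  have hsym : ∀ a b, S a b = S b a := by
    intro a b
    have := hS.1
    rw [Matrix.IsHermitian] at this
    conv_lhs => rw [← this]
    simp [Matrix.conjTranspose_apply]
  have hrow : ∀ i : Fin p, ∀ k, M i k = 0 := by
    intro i
    induction i using WellFounded.induction hwf with
    | _ i IH =>
    -- IH : ∀ j, R j i → ∀ k, M j k = 0
    set x : Fin p → ℝ := fun k => M i k with hx
    have hMSii : (M * S) i i = 0 := by
      have h1 : (M * S + S * Mᵀ) i i = 0 := by rw [heq]; rfl
      have h2 : (S * Mᵀ) i i = (M * S) i i := by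
        simp only [Matrix.mul_apply, Matrix.transpose_apply]
        exact Finset.sum_congr rfl fun k _ => by rw [hsym i k]; ring
      simp only [Matrix.add_apply] at h1
      linarith [h1, h2]
    have hMSij : ∀ j, R j i → (M * S) i j = 0 := by
      intro j hj
      have h1 : (M * S + S * Mᵀ) i j = 0 := by rw [heq]; rfl
      have h2 : (S * Mᵀ) i j = 0 := by
        simp only [Matrix.mul_apply, Matrix.transpose_apply]
        exact Finset.sum_eq_zero fun k _ => by rw [IH j hj k]; ring
      simp only [Matrix.add_apply] at h1
      linarith [h1, h2]
    have hquad : dotProduct (star x) (S *ᵥ x) = 0 := by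
      rw [star_trivial]
      simp only [dotProduct, Matrix.mulVec, dotProduct]
      apply Finset.sum_eq_zero
      intro j _
      rcases eq_or_ne (x j) 0 with h0 | h0
      · rw [h0]; ring
      · have hedge : (j, i) ∈ E := by
          by_contra hc
          exact h0 (hM j i hc)
        have hterm : (∑ k, S j k * x k) = (M * S) i j := by
          simp only [Matrix.mul_apply, hx]
          exact Finset.sum_congr rfl fun k _ => by rw [hsym j k]; ring
        rcases eq_or_ne j i with rfl | hne
        · rw [hterm, hMSii]; ring
        · rw [hterm, hMSij j ⟨hedge, hne⟩]; ring
    by_contra hcon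
    push_neg at hcon
    obtain ⟨k, hk⟩ := hcon
    have hxne : x ≠ 0 := by
      intro h0
      exact hk (congrFun h0 k)
    exact absurd hquad (ne_of_gt (hS.dotProduct_mulVec_pos hxne))
  ext i k
  simp [hrow i k]

set_option maxHeartbeats 1000000

open Filter Topology

section Top

variable {p : ℕ}

attribute [local instance] Matrix.normedAddCommGroup Matrix.normedSpace

abbrev MatP (p : ℕ) := Matrix (Fin p) (Fin p) ℝ

/-- The submodule of matrices supported on `E`. -/
def suppSubmodule (E : Set (Fin p × Fin p)) : Submodule ℝ (MatP p) where
  carrier := {M | InSupp E M}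
  add_mem' := fun ha hb i j h => by simp [Matrix.add_apply, ha i j h, hb i j h]
  zero_mem' := fun i j _ => rfl
  smul_mem' := fun c M hM i j h => by simp [Matrix.smul_apply, hM i j h]

/-- The Lyapunov linear map `M ↦ M S + S Mᵀ` on the support submodule. -/
def lyapLin (E : Set (Fin p × Fin p)) (S : MatP p) :
    suppSubmodule E →ₗ[ℝ] MatP p where
  toFun M := (M : MatP p) * S + S * (M : MatP p)ᵀ
  map_add' M N := by
    push_cast
    simp only [Matrix.add_mul, Matrix.transpose_add, Matrix.mul_add]
    abel
  map_smul' c M := by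
    push_cast
    simp only [Matrix.smul_mul, Matrix.transpose_smul, Matrix.mul_smul, RingHom.id_apply, id_eq,
      smul_add]

/-- same, as a linear map in `S` into continuous linear maps. -/
noncomputable def lyapT (E : Set (Fin p × Fin p)) :
    MatP p →ₗ[ℝ] (suppSubmodule E →L[ℝ] MatP p) where
  toFun S := (lyapLin E S).toContinuousLinearMap
  map_add' S S' := by
    ext M
    simp [lyapLin, Matrix.mul_add, Matrix.add_mul]
    abel
  map_smul' c S := by
    ext M
    simp [lyapLin, Matrix.mul_smul, Matrix.smul_mul, smul_add, mul_add]

lemma lyapT_apply (E : Set (Fin p × Fin p)) (S : MatP p) (M : suppSubmodule E) :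
    lyapT E S M = (M : MatP p) * S + S * (M : MatP p)ᵀ := rfl

lemma lyapT_cont (E : Set (Fin p × Fin p)) : Continuous (lyapT E) :=
  LinearMap.continuous_of_finiteDimensional (𝕜 := ℝ) (E := MatP p) (F' := suppSubmodule E →L[ℝ] MatP p) (lyapT E)

noncomputable local instance clmNormedAddCommGroup (E : Set (Fin p × Fin p)) :
    NormedAddCommGroup (suppSubmodule E →L[ℝ] MatP p) :=
  ContinuousLinearMap.toNormedAddCommGroup

theorem dag_aux {p : ℕ}
    (E : Set (Fin p × Fin p)) (hloops : ∀ i : Fin p, (i, i) ∈ E)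
    (hacyc : ∀ i : Fin p,
      ¬ Relation.TransGen (fun a b : Fin p => (a, b) ∈ E ∧ a ≠ b) i i)
    (C : Matrix (Fin p) (Fin p) ℝ) (hC : C.PosDef) :
    IsClosed {S : {A : Matrix (Fin p) (Fin p) ℝ // A.PosDef} |
      (S : Matrix (Fin p) (Fin p) ℝ) ∈ LyapModel E C} := by
  haveI : FirstCountableTopology (Matrix (Fin p) (Fin p) ℝ) :=
    inferInstanceAs (FirstCountableTopology (Fin p → Fin p → ℝ))
  apply IsSeqClosed.isClosed
  intro u L hu hL
  set Sseq : ℕ → MatP p := fun n => (u n : MatP p) with hSseq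
  have hS : Tendsto Sseq atTop (𝓝 (L : MatP p)) :=
    ((continuous_subtype_val.tendsto L).comp hL)
  have hmem : ∀ n, ∃ M : suppSubmodule E,
      (M : MatP p) * Sseq n + Sseq n * (M : MatP p)ᵀ + C = 0 := by
    intro n
    obtain ⟨-, M, hMsupp, hMeq⟩ := hu n
    exact ⟨⟨M, hMsupp⟩, hMeq⟩
  choose Ms hMs using hmem
  have hTn : ∀ n, lyapT E (Sseq n) (Ms n) = -C := by
    intro n
    rw [lyapT_apply]
    exact eq_neg_of_add_eq_zero_left (hMs n)
  -- injectivity at the limit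
  have hinj : Function.Injective (lyapT E (L : MatP p)) := by
    intro a b hab
    have hsub : lyapT E (L : MatP p) (a - b) = 0 := by rw [map_sub, hab, sub_self]
    rw [lyapT_apply] at hsub
    have : ((a - b : suppSubmodule E) : MatP p) = 0 :=
      lyap_inj E hacyc (L : MatP p) L.2 _ (a - b).2 hsub
    have := Submodule.coe_eq_zero.mp this
    rwa [sub_eq_zero] at this
  obtain ⟨K, hKpos, hK⟩ :=
    (LinearMap.injective_iff_antilipschitz ((lyapT E (L : MatP p)) :
      suppSubmodule E →ₗ[ℝ] MatP p)).mp hinj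
  set c : ℝ := (K : ℝ) with hc
  have hc0 : 0 < c := by exact_mod_cast hKpos
  have hnorm : ∀ M : suppSubmodule E, ‖M‖ ≤ c * ‖lyapT E (L : MatP p) M‖ := by
    intro M
    have h := hK.le_mul_dist M 0
    simpa [dist_zero_right, map_zero] using h
  -- eventual smallness of the operator difference
  have hDlim : Tendsto (fun n => ‖lyapT E ((L : MatP p) - Sseq n)‖) atTop (𝓝 0) := by
    have h1 : Tendsto (fun n => (L : MatP p) - Sseq n) atTop
        (𝓝 ((L : MatP p) - (L : MatP p))) := tendsto_const_nhds.sub hS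
    rw [sub_self] at h1
    have h2 := ((lyapT_cont E).tendsto 0).comp h1
    have h3 : lyapT E (0 : MatP p) = 0 := map_zero _
    rw [h3] at h2
    exact tendsto_zero_iff_norm_tendsto_zero.mp h2
  have hev : ∀ᶠ n in atTop, ‖lyapT E ((L : MatP p) - Sseq n)‖ < (2 * c)⁻¹ := by
    have hpos : (0 : ℝ) < (2 * c)⁻¹ := by positivity
    exact hDlim.eventually (gt_mem_nhds hpos)
  obtain ⟨N, hN⟩ := eventually_atTop.mp hev
  -- uniform bound on the solutions
  have hbound : ∀ n ≥ N, ‖Ms n‖ ≤ 2 * c * ‖C‖ := by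
    intro n hn
    have h1 : ‖Ms n‖ ≤ c * ‖lyapT E (L : MatP p) (Ms n)‖ := hnorm _
    have hsplit : lyapT E (L : MatP p) (Ms n) =
        lyapT E ((L : MatP p) - Sseq n) (Ms n) + lyapT E (Sseq n) (Ms n) := by
      have hh : ((L : MatP p) - Sseq n) + Sseq n = (L : MatP p) := by abel
      rw [← hh, map_add, ContinuousLinearMap.add_apply]
      rw [hh]
    have h2 : ‖lyapT E (L : MatP p) (Ms n)‖ ≤
        ‖lyapT E ((L : MatP p) - Sseq n) (Ms n)‖ + ‖lyapT E (Sseq n) (Ms n)‖ := by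
      rw [hsplit]; exact norm_add_le _ _
    have h3 : ‖lyapT E ((L : MatP p) - Sseq n) (Ms n)‖ ≤ (2 * c)⁻¹ * ‖Ms n‖ := by
      refine le_trans (ContinuousLinearMap.le_opNorm _ _) ?_
      exact mul_le_mul_of_nonneg_right (hN n hn).le (norm_nonneg _)
    have h4 : ‖lyapT E (Sseq n) (Ms n)‖ = ‖C‖ := by rw [hTn n, norm_neg]
    have hMn := norm_nonneg (Ms n)
    have hCn := norm_nonneg C
    have hinv : (2 * c)⁻¹ * (2 * c) = 1 := by
      field_simp
    nlinarith [h1, h2, h3, h4, mul_pos hc0 hc0]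
  -- extract a convergent subsequence
  have hball : ∀ k, Ms (N + k) ∈ Metric.closedBall (0 : suppSubmodule E) (2 * c * ‖C‖) := by
    intro k
    rw [Metric.mem_closedBall, dist_zero_right]
    exact hbound _ (Nat.le_add_right N k)
  obtain ⟨a, -, φ, hφ, ha⟩ :=
    tendsto_subseq_of_bounded Metric.isBounded_closedBall hball
  have hidx : Tendsto (fun k => N + φ k) atTop atTop :=
    tendsto_atTop_mono (fun k => Nat.le_add_left (φ k) N) hφ.tendsto_atTop
  have hSa : Tendsto (fun k => Sseq (N + φ k)) atTop (𝓝 (L : MatP p)) := hS.comp hidx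
  have hMa : Tendsto (fun k => ((Ms (N + φ k)) : MatP p)) atTop (𝓝 (a : MatP p)) :=
    ((continuous_subtype_val.tendsto a).comp ha)
  have hMat : Tendsto (fun k => ((Ms (N + φ k)) : MatP p)ᵀ) atTop (𝓝 ((a : MatP p)ᵀ)) :=
    ((continuous_id.matrix_transpose.tendsto _).comp hMa)
  have hlim : Tendsto (fun k => ((Ms (N + φ k)) : MatP p) * Sseq (N + φ k)
      + Sseq (N + φ k) * ((Ms (N + φ k)) : MatP p)ᵀ + C) atTop
      (𝓝 ((a : MatP p) * (L : MatP p) + (L : MatP p) * (a : MatP p)ᵀ + C)) :=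
    (((hMa.mul hSa).add (hSa.mul hMat)).add tendsto_const_nhds)
  have hzero : (a : MatP p) * (L : MatP p) + (L : MatP p) * (a : MatP p)ᵀ + C = 0 := by
    refine tendsto_nhds_unique hlim ?_
    have : (fun k => ((Ms (N + φ k)) : MatP p) * Sseq (N + φ k)
        + Sseq (N + φ k) * ((Ms (N + φ k)) : MatP p)ᵀ + C) = fun _ => (0 : MatP p) := by
      funext k
      exact hMs (N + φ k)
    rw [this]
    exact tendsto_const_nhds
  exact ⟨L.2, (a : MatP p), a.2, hzero⟩

end Top

/-- for a DAG (with all self-loops) and symmetric positive definite `C`,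
the model `M_{G,C}` is relatively closed in the set of positive definite matrices. -/
theorem dag_model_closed_in_posdef {p : ℕ}
    (E : Set (Fin p × Fin p)) (hloops : ∀ i : Fin p, (i, i) ∈ E)
    (hacyc : ∀ i : Fin p,
      ¬ Relation.TransGen (fun a b : Fin p => (a, b) ∈ E ∧ a ≠ b) i i)
    (C : Matrix (Fin p) (Fin p) ℝ) (hC : C.PosDef) :
    IsClosed {S : {A : Matrix (Fin p) (Fin p) ℝ // A.PosDef} |
      (S : Matrix (Fin p) (Fin p) ℝ) ∈ LyapModel E C} := by
  exact dag_aux E hloops hacyc C hC
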